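/- Let L be the 4-dimensional 3-Lie algebra over a field of characteristic 0 with basis x₁,x₂,x₃,x₄ and the single nonzero bracket [x₁,x₂,x₃]=x₄. Then L is nilpotent, A = span{x₁,x₂,x₄} is a 3-dimensional subspace with [A,A,A]=0 that is an ideal, I = span{x₁,x₄} is an abelian ideal ([I,I,L]=0), and α(L) = 3 > β(L) = 2. In particular, for nilpotent 3-Lie algebras the maximal dimensions of abelian subalgebras and abelian ideals may differ. -/

import Mathlib

open Module

/-- A 3-Lie algebra structure on a vector space `L` over `F`: a trilinear,
fully alternating bracket satisfying the fundamental (generalized Jacobi) identity. -/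
structure ThreeLie (F : Type*) [Field F] (L : Type*) [AddCommGroup L] [Module F L] where
  br : L →ₗ[F] L →ₗ[F] L →ₗ[F] L
  alt₁₂ : ∀ x z : L, br x x z = 0
  alt₂₃ : ∀ x y : L, br x y y = 0
  fund : ∀ x₁ x₂ x₃ y₂ y₃ : L,
    br (br x₁ x₂ x₃) y₂ y₃ =
      br (br x₁ y₂ y₃) x₂ x₃ + br x₁ (br x₂ y₂ y₃) x₃ + br x₁ x₂ (br x₃ y₂ y₃)

namespace ThreeLie

variable {F : Type*} [Field F] {L : Type*} [AddCommGroup L] [Module F L] (T : ThreeLie F L)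

/-- `I` is an ideal: `[I, L, L] ⊆ I`. -/
def IsIdeal (I : Submodule F L) : Prop := ∀ a ∈ I, ∀ x y : L, T.br a x y ∈ I

/-- `I` is an abelian ideal: an ideal with `[I, I, L] = 0`. -/
def IsAbelianIdeal (I : Submodule F L) : Prop :=
  T.IsIdeal I ∧ ∀ a ∈ I, ∀ b ∈ I, ∀ x : L, T.br a b x = 0

/-- `A` is an abelian subalgebra: `[A, A, A] = 0`. -/
def IsAbelianSubalgebra (A : Submodule F L) : Prop :=
  ∀ a ∈ A, ∀ b ∈ A, ∀ c ∈ A, T.br a b c = 0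

/-- `I` is a hypo-abelian ideal: an ideal with `[I,I,I] = 0` but `[I,I,L] ≠ 0`. -/
def IsHypoAbelianIdeal (I : Submodule F L) : Prop :=
  T.IsIdeal I ∧ T.IsAbelianSubalgebra I ∧ ¬ (∀ a ∈ I, ∀ b ∈ I, ∀ x : L, T.br a b x = 0)

/-- The derived algebra `L¹ = [L, L, L]`. -/
def derived : Submodule F L := Submodule.span F {z | ∃ x y w : L, z = T.br x y w}

/-- The center `Z(L)`. -/
def center : Submodule F L where
  carrier := {x | ∀ y z : L, T.br x y z = 0}
  add_mem' := by
    intro a b ha hb y z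
    simp [map_add, LinearMap.add_apply, ha y z, hb y z]
  zero_mem' := by intro y z; simp
  smul_mem' := by
    intro c a ha y z
    simp [map_smul, LinearMap.smul_apply, ha y z]

/-- The lower central series. -/
def lcs : ℕ → Submodule F L
  | 0 => ⊤
  | n + 1 => Submodule.span F {z | ∃ a ∈ lcs n, ∃ x y : L, z = T.br a x y}

/-- Nilpotency. -/
def IsNilpotent : Prop := ∃ s : ℕ, T.lcs s = ⊥

end ThreeLie

namespace ThreeLie
variable {F : Type*} [Field F] {L : Type*} [AddCommGroup L] [Module F L] (T : ThreeLie F L)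

lemma sw12 (u v w : L) : T.br u v w = - T.br v u w := by
  have h := T.alt₁₂ (u + v) w
  simp only [map_add, LinearMap.add_apply, T.alt₁₂, zero_add, add_zero] at h
  exact eq_neg_of_add_eq_zero_right h

lemma sw23 (u v w : L) : T.br u v w = - T.br u w v := by
  have h := T.alt₂₃ u (v + w)
  simp only [map_add, LinearMap.add_apply, T.alt₂₃, zero_add, add_zero] at h
  exact eq_neg_of_add_eq_zero_right h

lemma alt13 (u v : L) : T.br u v u = 0 := by
  rw [T.sw12, T.alt₂₃, neg_zero]
end ThreeLie

namespace ThreeLie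
variable {F : Type*} [Field F] {L : Type*} [AddCommGroup L] [Module F L] (T : ThreeLie F L)

lemma key (x : Basis (Fin 4) F L)
    (h1 : T.br (x 0) (x 1) (x 2) = x 3) (h2 : T.br (x 0) (x 1) (x 3) = 0)
    (h3 : T.br (x 0) (x 2) (x 3) = 0) (h4 : T.br (x 1) (x 2) (x 3) = 0)
    (u v w : L) : T.br u v w =
    (x.repr u 0 * x.repr v 1 * x.repr w 2 - x.repr u 0 * x.repr v 2 * x.repr w 1
     - x.repr u 1 * x.repr v 0 * x.repr w 2 + x.repr u 1 * x.repr v 2 * x.repr w 0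
     + x.repr u 2 * x.repr v 0 * x.repr w 1 - x.repr u 2 * x.repr v 1 * x.repr w 0) • x 3 := by
  have p021 : T.br (x 0) (x 2) (x 1) = -x 3 := by rw [T.sw23, h1]
  have p102 : T.br (x 1) (x 0) (x 2) = -x 3 := by rw [T.sw12, h1]
  have p120 : T.br (x 1) (x 2) (x 0) = x 3 := by rw [T.sw23, T.sw12, h1, neg_neg]
  have p201 : T.br (x 2) (x 0) (x 1) = x 3 := by rw [T.sw12, T.sw23, h1, neg_neg]
  have p210 : T.br (x 2) (x 1) (x 0) = -x 3 := by rw [T.sw23, p201]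
  have z031 : T.br (x 0) (x 3) (x 1) = 0 := by rw [T.sw23, h2, neg_zero]
  have z103 : T.br (x 1) (x 0) (x 3) = 0 := by rw [T.sw12, h2, neg_zero]
  have z301 : T.br (x 3) (x 0) (x 1) = 0 := by rw [T.sw12, z031, neg_zero]
  have z310 : T.br (x 3) (x 1) (x 0) = 0 := by rw [T.sw23, z301, neg_zero]
  have z130 : T.br (x 1) (x 3) (x 0) = 0 := by rw [T.sw12, z310, neg_zero]
  have z032 : T.br (x 0) (x 3) (x 2) = 0 := by rw [T.sw23, h3, neg_zero]
  have z203 : T.br (x 2) (x 0) (x 3) = 0 := by rw [T.sw12, h3, neg_zero]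
  have z302 : T.br (x 3) (x 0) (x 2) = 0 := by rw [T.sw12, z032, neg_zero]
  have z320 : T.br (x 3) (x 2) (x 0) = 0 := by rw [T.sw23, z302, neg_zero]
  have z230 : T.br (x 2) (x 3) (x 0) = 0 := by rw [T.sw12, z320, neg_zero]
  have z132 : T.br (x 1) (x 3) (x 2) = 0 := by rw [T.sw23, h4, neg_zero]
  have z213 : T.br (x 2) (x 1) (x 3) = 0 := by rw [T.sw12, h4, neg_zero]
  have z312 : T.br (x 3) (x 1) (x 2) = 0 := by rw [T.sw12, z132, neg_zero]
  have z321 : T.br (x 3) (x 2) (x 1) = 0 := by rw [T.sw23, z312, neg_zero]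
  have z231 : T.br (x 2) (x 3) (x 1) = 0 := by rw [T.sw12, z321, neg_zero]
  conv_lhs => rw [← x.sum_repr u, ← x.sum_repr v, ← x.sum_repr w]
  simp only [map_sum, map_add, LinearMap.add_apply, map_smul, LinearMap.sum_apply, LinearMap.smul_apply, Fin.sum_univ_four,
    h1, h2, h3, h4, p021, p102, p120, p201, p210, z031, z103, z301, z310, z130,
    z032, z203, z302, z320, z230, z132, z213, z312, z321, z231,
    T.alt₁₂, T.alt₂₃, T.alt13, smul_zero, smul_neg, add_zero, zero_add, smul_smul]
  module
end ThreeLie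


/-- the 4-dimensional 3-Lie algebra with single nonzero bracket
`[x₁,x₂,x₃]=x₄` is nilpotent, `A = span{x₁,x₂,x₄}` is an ideal with `[A,A,A]=0`,
`I = span{x₁,x₄}` is an abelian ideal, and `α(L) = 3 > β(L) = 2`. -/
theorem nilpotent_alpha_ne_beta {F : Type*} [Field F] [CharZero F] {L : Type*}
    [AddCommGroup L] [Module F L] (T : ThreeLie F L) (x : Basis (Fin 4) F L)
    (h1 : T.br (x 0) (x 1) (x 2) = x 3) (h2 : T.br (x 0) (x 1) (x 3) = 0)
    (h3 : T.br (x 0) (x 2) (x 3) = 0) (h4 : T.br (x 1) (x 2) (x 3) = 0) :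
    T.IsNilpotent ∧
    T.IsIdeal (Submodule.span F {x 0, x 1, x 3}) ∧
    T.IsAbelianSubalgebra (Submodule.span F {x 0, x 1, x 3}) ∧
    T.IsAbelianIdeal (Submodule.span F {x 0, x 3}) ∧
    (∃ A : Submodule F L, T.IsAbelianSubalgebra A ∧ finrank F A = 3) ∧
    (∀ A : Submodule F L, T.IsAbelianSubalgebra A → finrank F A ≤ 3) ∧
    (∃ I : Submodule F L, T.IsAbelianIdeal I ∧ finrank F I = 2) ∧
    (∀ I : Submodule F L, T.IsAbelianIdeal I → finrank F I ≤ 2) := by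
  have x3ne : (x 3 : L) ≠ 0 := x.ne_zero 3
  haveI : FiniteDimensional F L := Module.Finite.of_basis x
  have key := T.key x h1 h2 h3 h4
  have span3 : ∀ u v w : L, T.br u v w ∈ Submodule.span F ({x 3} : Set L) := by
    intro u v w; rw [key]
    exact Submodule.smul_mem _ _ (Submodule.mem_span_singleton_self _)
  have brx3 : ∀ u v : L, T.br (x 3) u v = 0 := by
    intro u v; rw [key]; simp [Basis.repr_self]
  -- coordinate vanishing on the spans
  have hA2 : ∀ a ∈ Submodule.span F ({x 0, x 1, x 3} : Set L), x.repr a 2 = 0 := by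
    intro a ha
    have hle : Submodule.span F ({x 0, x 1, x 3} : Set L) ≤ LinearMap.ker (x.coord 2) := by
      rw [Submodule.span_le]
      intro z hz
      simp only [Set.mem_insert_iff, Set.mem_singleton_iff] at hz
      rcases hz with rfl | rfl | rfl <;>
        simp [LinearMap.mem_ker, Basis.coord_apply, Basis.repr_self]
    simpa [Basis.coord_apply] using hle ha
  have hIc : ∀ k : Fin 4, k ≠ 0 → k ≠ 3 →
      ∀ a ∈ Submodule.span F ({x 0, x 3} : Set L), x.repr a k = 0 := by
    intro k hk0 hk3 a ha
    have hle : Submodule.span F ({x 0, x 3} : Set L) ≤ LinearMap.ker (x.coord k) := by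
      rw [Submodule.span_le]
      intro z hz
      simp only [Set.mem_insert_iff, Set.mem_singleton_iff] at hz
      rcases hz with rfl | rfl <;>
        simp [LinearMap.mem_ker, Basis.coord_apply, Basis.repr_self,
          Finsupp.single_apply, hk0.symm, hk3.symm]
    simpa [Basis.coord_apply] using hle ha
  -- nilpotency
  have nil : T.IsNilpotent := by
    refine ⟨2, ?_⟩
    have l1 : T.lcs 1 ≤ Submodule.span F ({x 3} : Set L) := by
      show Submodule.span F {z | ∃ a ∈ T.lcs 0, ∃ u v : L, z = T.br a u v} ≤ _
      apply Submodule.span_le.mpr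
      rintro z ⟨a, -, u, v, rfl⟩
      exact span3 a u v
    rw [eq_bot_iff]
    show Submodule.span F {z | ∃ a ∈ T.lcs 1, ∃ u v : L, z = T.br a u v} ≤ ⊥
    apply Submodule.span_le.mpr
    rintro z ⟨a, ha, u, v, rfl⟩
    obtain ⟨c, rfl⟩ := Submodule.mem_span_singleton.mp (l1 ha)
    simp [map_smul, LinearMap.smul_apply, brx3]
  have x3A : x 3 ∈ Submodule.span F ({x 0, x 1, x 3} : Set L) :=
    Submodule.subset_span (by simp)
  have idealA : T.IsIdeal (Submodule.span F {x 0, x 1, x 3}) := by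
    intro a _ u v; rw [key]; exact Submodule.smul_mem _ _ x3A
  have abA : T.IsAbelianSubalgebra (Submodule.span F {x 0, x 1, x 3}) := by
    intro a ha b hb c hc
    rw [key]
    simp [hA2 a ha, hA2 b hb, hA2 c hc]
  have abI : T.IsAbelianIdeal (Submodule.span F {x 0, x 3}) := by
    constructor
    · intro a _ u v; rw [key]
      exact Submodule.smul_mem _ _ (Submodule.subset_span (by simp))
    · intro a ha b hb u
      rw [key]
      simp [hIc 1 (by decide) (by decide) a ha, hIc 1 (by decide) (by decide) b hb,
        hIc 2 (by decide) (by decide) a ha, hIc 2 (by decide) (by decide) b hb]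
  -- finrank of the two spans
  have frA : finrank F (Submodule.span F ({x 0, x 1, x 3} : Set L)) = 3 := by
    have li : LinearIndependent F (x ∘ ![0, 1, 3]) :=
      x.linearIndependent.comp ![0, 1, 3] (by decide)
    have hr : Set.range (x ∘ ![(0 : Fin 4), 1, 3]) = {x 0, x 1, x 3} := by
      rw [Set.range_comp]
      have h0 : Set.range ![(0 : Fin 4), 1, 3] = {0, 1, 3} := by
        ext i
        constructor
        · rintro ⟨j, rfl⟩; fin_cases j <;> simp
        · intro hi
          simp only [Set.mem_insert_iff, Set.mem_singleton_iff] at hi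
          rcases hi with rfl | rfl | rfl
          exacts [⟨0, rfl⟩, ⟨1, rfl⟩, ⟨2, rfl⟩]
      rw [h0]
      simp [Set.image_insert_eq]
    have hc := finrank_span_eq_card li
    rwa [hr, Fintype.card_fin] at hc
  have frI : finrank F (Submodule.span F ({x 0, x 3} : Set L)) = 2 := by
    have li : LinearIndependent F (x ∘ ![0, 3]) :=
      x.linearIndependent.comp ![0, 3] (by decide)
    have hr : Set.range (x ∘ ![(0 : Fin 4), 3]) = {x 0, x 3} := by
      rw [Set.range_comp]
      have h0 : Set.range ![(0 : Fin 4), 3] = {0, 3} := by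
        ext i
        constructor
        · rintro ⟨j, rfl⟩; fin_cases j <;> simp
        · intro hi
          simp only [Set.mem_insert_iff, Set.mem_singleton_iff] at hi
          rcases hi with rfl | rfl
          exacts [⟨0, rfl⟩, ⟨1, rfl⟩]
      rw [h0]
      simp [Set.image_insert_eq]
    have hc := finrank_span_eq_card li
    rwa [hr, Fintype.card_fin] at hc
  have frL : finrank F L = 4 := by
    rw [Module.finrank_eq_card_basis x, Fintype.card_fin]
  have alphaLe : ∀ A : Submodule F L, T.IsAbelianSubalgebra A → finrank F A ≤ 3 := by
    intro A hA
    have h4' : finrank F A ≤ 4 := frL ▸ Submodule.finrank_le A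
    have hne : finrank F A ≠ 4 := by
      intro heq
      have hT : A = ⊤ := Submodule.eq_top_of_finrank_eq (by rw [heq, frL])
      have h0 := hA (x 0) (by simp [hT]) (x 1) (by simp [hT]) (x 2) (by simp [hT])
      rw [h1] at h0
      exact x3ne h0
    omega
  have betaLe : ∀ I : Submodule F L, T.IsAbelianIdeal I → finrank F I ≤ 2 := by
    rintro I ⟨-, hab⟩
    -- the three minors vanish
    have m01 : ∀ a ∈ I, ∀ b ∈ I, x.repr a 0 * x.repr b 1 = x.repr a 1 * x.repr b 0 := by
      intro a ha b hb
      have e := hab a ha b hb (x 2)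
      rw [key] at e
      have e2 := (smul_eq_zero.mp e).resolve_right x3ne
      simp [Basis.repr_self, Finsupp.single_apply] at e2
      first
        | linear_combination e2
        | linear_combination -e2
    have m02 : ∀ a ∈ I, ∀ b ∈ I, x.repr a 0 * x.repr b 2 = x.repr a 2 * x.repr b 0 := by
      intro a ha b hb
      have e := hab a ha b hb (x 1)
      rw [key] at e
      have e2 := (smul_eq_zero.mp e).resolve_right x3ne
      simp [Basis.repr_self, Finsupp.single_apply] at e2
      first
        | linear_combination e2
        | linear_combination -e2
    have m12 : ∀ a ∈ I, ∀ b ∈ I, x.repr a 1 * x.repr b 2 = x.repr a 2 * x.repr b 1 := by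
      intro a ha b hb
      have e := hab a ha b hb (x 0)
      rw [key] at e
      have e2 := (smul_eq_zero.mp e).resolve_right x3ne
      simp [Basis.repr_self, Finsupp.single_apply] at e2
      first
        | linear_combination e2
        | linear_combination -e2
    set π : L →ₗ[F] (Fin 3 → F) :=
      LinearMap.pi (fun i => ![x.coord 0, x.coord 1, x.coord 2] i) with hπ
    set p : I →ₗ[F] (Fin 3 → F) := π.comp I.subtype with hp
    have pe0 : ∀ a : I, p a 0 = x.repr (a : L) 0 := by
      intro a; simp [hp, hπ, Basis.coord_apply]
    have pe1 : ∀ a : I, p a 1 = x.repr (a : L) 1 := by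
      intro a; simp [hp, hπ, Basis.coord_apply]
    have pe2 : ∀ a : I, p a 2 = x.repr (a : L) 2 := by
      intro a; simp [hp, hπ, Basis.coord_apply]
    have mfun : ∀ (a b : I) (i j : Fin 3), p a i * p b j = p a j * p b i := by
      intro a b i j
      have hmk2 : (⟨2, by norm_num⟩ : Fin 3) = 2 := rfl
      fin_cases i <;> fin_cases j <;>
        simp only [Fin.mk_zero, Fin.mk_one, hmk2, pe0, pe1, pe2, Fin.isValue] <;>
        first
          | exact m01 (a : L) a.2 (b : L) b.2
          | exact (m01 (a : L) a.2 (b : L) b.2).symm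
          | exact m02 (a : L) a.2 (b : L) b.2
          | exact (m02 (a : L) a.2 (b : L) b.2).symm
          | exact m12 (a : L) a.2 (b : L) b.2
          | exact (m12 (a : L) a.2 (b : L) b.2).symm
          | ring
          | linear_combination (m12 (↑a) a.2 (↑b) b.2)
          | linear_combination (-(m12 (↑a) a.2 (↑b) b.2))
    have rn := LinearMap.finrank_range_add_finrank_ker p
    have hker : finrank F (LinearMap.ker p) ≤ 1 := by
      have e : finrank F (LinearMap.ker p)
          = finrank F ((LinearMap.ker p).map I.subtype) :=
        (Submodule.equivMapOfInjective I.subtype I.injective_subtype _).finrank_eq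
      rw [e]
      have hle : (LinearMap.ker p).map I.subtype ≤ Submodule.span F ({x 3} : Set L) := by
        rintro y ⟨a, ha, rfl⟩
        have hz : ∀ i : Fin 3, p a i = 0 := fun i =>
          congrFun (LinearMap.mem_ker.mp ha) i
        have r0 : x.repr (a : L) 0 = 0 := by rw [← pe0]; exact hz 0
        have r1 : x.repr (a : L) 1 = 0 := by rw [← pe1]; exact hz 1
        have r2 : x.repr (a : L) 2 = 0 := by rw [← pe2]; exact hz 2
        have : (a : L) = x.repr (a : L) 3 • x 3 := by
          conv_lhs => rw [← x.sum_repr (a : L)]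
          rw [Fin.sum_univ_four, r0, r1, r2]
          simp
        rw [show I.subtype a = (a : L) from rfl, this]
        exact Submodule.smul_mem _ _ (Submodule.mem_span_singleton_self _)
      calc finrank F ((LinearMap.ker p).map I.subtype)
          ≤ finrank F (Submodule.span F ({x 3} : Set L)) := Submodule.finrank_mono hle
        _ = 1 := finrank_span_singleton x3ne
    have hrange : finrank F (LinearMap.range p) ≤ 1 := by
      rw [finrank_le_one_iff]
      rcases eq_or_ne (LinearMap.range p) ⊥ with hbot | hbot
      · refine ⟨0, fun w => ⟨0, ?_⟩⟩
        have hw : (w : Fin 3 → F) = 0 := by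
          have hz := LinearMap.range_eq_bot.mp hbot
          obtain ⟨b, hb⟩ := w.2
          rw [← hb, hz]
          simp
        rw [← Subtype.coe_inj]
        simp [hw]
      · obtain ⟨v, hv, hvne⟩ := Submodule.exists_mem_ne_zero_of_ne_bot hbot
        refine ⟨⟨v, hv⟩, fun w => ?_⟩
        obtain ⟨a, ha⟩ := hv
        obtain ⟨b, hb⟩ := w.2
        obtain ⟨i0, hi0⟩ : ∃ i, v i ≠ 0 := by
          by_contra hc; push_neg at hc; exact hvne (funext hc)
        refine ⟨(w : Fin 3 → F) i0 / v i0, ?_⟩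
        rw [← Subtype.coe_inj]
        show ((w : Fin 3 → F) i0 / v i0) • v = (w : Fin 3 → F)
        funext j
        rw [Pi.smul_apply, smul_eq_mul, div_mul_eq_mul_div, div_eq_iff hi0]
        rw [← ha, ← hb]
        linear_combination mfun b a i0 j
    omega
  exact ⟨nil, idealA, abA, abI,
    ⟨_, abA, frA⟩, alphaLe, ⟨_, abI, frI⟩, betaLe⟩
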